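/- If G is a connected graph with minimum degree at least d ≥ 2 on n vertices with (8/3)d ≤ n ≤ 3d, then the degree sum of G^4 is at least (7/3)d·n. -/

import Mathlib

/-- The `k`-th power of a simple graph `G`: two distinct vertices are adjacent
iff their distance in `G` is at most `k`. -/
def SimpleGraph.power {V : Type*} (G : SimpleGraph V) (k : ℕ) : SimpleGraph V where
  Adj u v := u ≠ v ∧ G.dist u v ≤ k
  symm := ⟨fun u v h => ⟨h.1.symm, by rw [SimpleGraph.dist_comm]; exact h.2⟩⟩
  loopless := ⟨fun v h => h.1 rfl⟩

open Finset

set_option linter.unusedSectionVars false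
namespace AD4Paux

variable {V : Type*} [Fintype V] {G : SimpleGraph V}

lemma dist_le_one_of_adj {a b : V} (h : G.Adj a b) : G.dist a b ≤ 1 := by
  simpa using SimpleGraph.dist_le (SimpleGraph.Walk.cons h SimpleGraph.Walk.nil)

lemma scatter [DecidableEq V] [DecidableRel G.Adj] {d : ℕ} (hconn : G.Connected)
    (hmin : ∀ v : V, d ≤ G.degree v) (hn2 : Fintype.card V ≤ 3 * d)
    {a b c : V} (hab : 3 ≤ G.dist a b) (hac : 3 ≤ G.dist a c) (hbc : 3 ≤ G.dist b c) :
    False := by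
  have hmem : ∀ x y : V, y ∈ insert x (G.neighborFinset x) → G.dist x y ≤ 1 := by
    intro x y hy
    rcases Finset.mem_insert.mp hy with h | h
    · subst h; simp [SimpleGraph.dist_self]
    · exact dist_le_one_of_adj (by simpa using h)
  have hcard : ∀ x : V, d + 1 ≤ (insert x (G.neighborFinset x)).card := by
    intro x
    rw [Finset.card_insert_of_notMem (by simp)]
    have := hmin x
    rw [SimpleGraph.card_neighborFinset_eq_degree]
    omega
  have hdisj : ∀ x y : V, 3 ≤ G.dist x y →
      Disjoint (insert x (G.neighborFinset x)) (insert y (G.neighborFinset y)) := by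
    intro x y hxy
    rw [Finset.disjoint_left]
    intro z hzx hzy
    have h1 := hmem x z hzx
    have h2 := hmem y z hzy
    have htri := hconn.dist_triangle (u := x) (v := z) (w := y)
    rw [SimpleGraph.dist_comm (u := y)] at h2
    omega
  have h12 := hdisj a b hab
  have h13 := hdisj a c hac
  have h23 := hdisj b c hbc
  have hcu : (insert a (G.neighborFinset a) ∪ insert b (G.neighborFinset b)
      ∪ insert c (G.neighborFinset c)).card ≤ Fintype.card V := by
    simpa using Finset.card_le_card
      (Finset.subset_univ (insert a (G.neighborFinset a) ∪ insert b (G.neighborFinset b)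
        ∪ insert c (G.neighborFinset c)))
  rw [Finset.card_union_of_disjoint (by exact Finset.disjoint_union_left.mpr ⟨h13, h23⟩),
    Finset.card_union_of_disjoint h12] at hcu
  have := hcard a; have := hcard b; have := hcard c
  omega

lemma dist_getVert_le (hconn : G.Connected) {u v : V} (p : G.Walk u v) (i : ℕ) :
    G.dist u (p.getVert i) ≤ i := by
  induction i with
  | zero => simp [SimpleGraph.Walk.getVert_zero, SimpleGraph.dist_self]
  | succ i ih =>
    by_cases hi : i < p.length
    · have hadj := p.adj_getVert_succ hi
      have htri := hconn.dist_triangle (u := u) (v := p.getVert i) (w := p.getVert (i+1))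
      have := dist_le_one_of_adj hadj
      omega
    · rw [p.getVert_of_length_le (show p.length ≤ i + 1 by omega)]
      have := SimpleGraph.dist_le p
      omega

lemma dist_getVert_le' (hconn : G.Connected) {u v : V} (p : G.Walk u v) (i : ℕ)
    (hi : i ≤ p.length) : G.dist (p.getVert i) v ≤ p.length - i := by
  have h := dist_getVert_le hconn p.reverse (p.length - i)
  rw [SimpleGraph.Walk.getVert_reverse] at h
  have heq : p.length - (p.length - i) = i := by omega
  rw [heq] at h
  rw [SimpleGraph.dist_comm]
  exact h

lemma final_arith (n d F p q r2 r3 na nb cc t5 t6 R2c R3c : ℕ)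
    (hn1 : 8*d ≤ 3*n) (hn2 : n ≤ 3*d)
    (hcardU : na + nb + 2 + cc + t5 + t6 ≤ n)
    (hNA1 : d + 1 ≤ na) (hNB1 : d + 1 ≤ nb)
    (hNA2 : p + r2 ≤ na) (hNB2 : q + r3 ≤ nb)
    (ht5 : t5 + r2 = R2c) (ht6 : t6 + r3 = R3c)
    (hx2 : d ≤ 1 + cc + R2c) (hx3 : d ≤ 1 + cc + R3c)
    (hF : F ≤ p*q + q*p) :
    7*d*n + 3*F + 3*n ≤ 3*(n*n) := by
  have hq' : q + r3 + 2*d + 2 ≤ n + r2 := by omega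
  have hp' : p + r2 + 2*d + 2 ≤ n + r3 := by omega
  have hd4 : 4 ≤ d := by omega
  have hZ : (7*(d:ℤ)*n + 3*F + 3*n : ℤ) ≤ 3*((n:ℤ)*n) := by
    have h1 : (q : ℤ) ≤ (n : ℤ) + r2 - r3 - 2*d - 2 := by
      have := hq'; zify at this; linarith
    have h2 : (p : ℤ) ≤ (n : ℤ) + r3 - r2 - 2*d - 2 := by
      have := hp'; zify at this; linarith
    have hq0 : (0:ℤ) ≤ (q : ℤ) := Int.natCast_nonneg _
    have hp0 : (0:ℤ) ≤ (p : ℤ) := Int.natCast_nonneg _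
    have hA0 : (0:ℤ) ≤ (n : ℤ) + r2 - r3 - 2*d - 2 := le_trans hq0 h1
    have hprodAB : (q : ℤ) * p
        ≤ ((n : ℤ) + r2 - r3 - 2*d - 2) * ((n : ℤ) + r3 - r2 - 2*d - 2) :=
      mul_le_mul h1 h2 hp0 hA0
    have hFle' : (F:ℤ) ≤ (p:ℤ) * q + (q:ℤ) * p := by exact_mod_cast hF
    have h8d : (0:ℤ) ≤ 3*(n:ℤ) - 8*d := by
      have := hn1; zify at this; linarith
    have h3d : (0:ℤ) ≤ 3*(d:ℤ) - n := by
      have := hn2; zify at this; linarith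
    have hd4' : (4:ℤ) ≤ (d:ℤ) := by exact_mod_cast hd4
    nlinarith [hprodAB, hFle', mul_nonneg h8d h3d, hd4', h8d, h3d,
      sq_nonneg ((r2 : ℤ) - (r3 : ℤ))]
  exact_mod_cast hZ

end AD4Paux
theorem avg_degree_fourth_power_boundary {V : Type*} [Fintype V] (G : SimpleGraph V) (d : ℕ)
    (hd : 2 ≤ d) (hconn : G.Connected) (hmin : ∀ v : V, d ≤ (G.neighborSet v).ncard)
    (hn1 : 8 * d ≤ 3 * Fintype.card V) (hn2 : Fintype.card V ≤ 3 * d) :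
    (7 / 3 * d * Fintype.card V : ℝ) ≤ ∑ v : V, (((G.power 4).neighborSet v).ncard : ℝ) := by
  classical
  set n := Fintype.card V with hn_def
  have hdegmin : ∀ v : V, d ≤ G.degree v := by
    intro v
    have h := hmin v
    rwa [Set.ncard_eq_toFinset_card', ← SimpleGraph.neighborFinset_def,
      SimpleGraph.card_neighborFinset_eq_degree] at h
  have tri : ∀ a b c : V, G.dist a c ≤ G.dist a b + G.dist b c :=
    fun a b c => hconn.dist_triangle (u := a) (v := b) (w := c)
  have symd : ∀ a b : V, G.dist a b = G.dist b a := fun a b => SimpleGraph.dist_comm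
  have hadj1 : ∀ a b : V, G.Adj a b → G.dist a b ≤ 1 := fun a b h => AD4Paux.dist_le_one_of_adj h
  -- partition per vertex
  have hpervertex : ∀ v : V, ((Finset.univ.filter fun z => v ≠ z ∧ G.dist v z ≤ 4).card
      + (Finset.univ.filter fun z => 5 ≤ G.dist v z).card) + 1 = n := by
    intro v
    have hsplit : (Finset.univ.filter fun z => v ≠ z ∧ G.dist v z ≤ 4)
        ∪ (Finset.univ.filter fun z => 5 ≤ G.dist v z) = Finset.univ.erase v := by
      ext z
      simp only [Finset.mem_union, Finset.mem_filter, Finset.mem_univ, true_and,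
        Finset.mem_erase, and_true]
      constructor
      · rintro (⟨h1, _⟩ | h)
        · exact Ne.symm h1
        · intro hz; subst hz; rw [SimpleGraph.dist_self] at h; omega
      · intro hz
        have : v ≠ z := Ne.symm hz
        by_cases hle : G.dist v z ≤ 4
        · exact Or.inl ⟨this, hle⟩
        · exact Or.inr (by omega)
    have hdisj : Disjoint (Finset.univ.filter fun z => v ≠ z ∧ G.dist v z ≤ 4)
        (Finset.univ.filter fun z => 5 ≤ G.dist v z) := by
      rw [Finset.disjoint_left]
      intro z h1 h2
      simp only [Finset.mem_filter] at h1 h2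
      omega
    have hcard := Finset.card_union_of_disjoint hdisj
    rw [hsplit] at hcard
    rw [Finset.card_erase_of_mem (Finset.mem_univ v), Finset.card_univ, ← hn_def] at hcard
    have hn1' : 1 ≤ n := by omega
    omega
  set deg4 : V → ℕ := fun v => (Finset.univ.filter fun z => v ≠ z ∧ G.dist v z ≤ 4).card
    with hdeg4_def
  set m : V → ℕ := fun v => (Finset.univ.filter fun z => 5 ≤ G.dist v z).card with hm_def
  set F := ∑ v : V, m v with hF_def
  have hsum : (∑ v : V, deg4 v) + F + n = n * n := by
    have h := Finset.sum_congr rfl (fun v (_ : v ∈ Finset.univ) => hpervertex v)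
    rw [Finset.sum_add_distrib, Finset.sum_add_distrib, Finset.sum_const, Finset.card_univ,
      smul_eq_mul, mul_one, Finset.sum_const, Finset.card_univ, smul_eq_mul] at h
    exact h
  have hgoalcast : ∑ v : V, (((G.power 4).neighborSet v).ncard : ℝ)
      = ((∑ v : V, deg4 v : ℕ) : ℝ) := by
    rw [Nat.cast_sum]
    apply Finset.sum_congr rfl
    intro v _
    congr 1
    have hset : (G.power 4).neighborSet v
        = ↑(Finset.univ.filter fun z => v ≠ z ∧ G.dist v z ≤ 4) := by
      ext z
      simp only [SimpleGraph.neighborSet, Set.mem_setOf_eq, Finset.coe_filter,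
        Finset.mem_univ, true_and]
      exact Iff.rfl
    rw [hset, Set.ncard_coe_finset]
  -- the key inequality
  have hkey : 7 * d * n + 3 * F + 3 * n ≤ 3 * (n * n) := by
    by_cases hfar : ∃ w z : V, 5 ≤ G.dist w z
    · obtain ⟨u, v0, huv0⟩ := hfar
      obtain ⟨pw, hpw⟩ := hconn.exists_walk_length_eq_dist u v0
      set x1 := pw.getVert 1 with hx1_def
      set x2 := pw.getVert 2 with hx2_def
      set x3 := pw.getVert 3 with hx3_def
      set x4 := pw.getVert 4 with hx4_def
      have hL5 : 5 ≤ pw.length := by rw [hpw]; exact huv0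
      have hu_le : ∀ i : ℕ, G.dist u (pw.getVert i) ≤ i :=
        fun i => AD4Paux.dist_getVert_le hconn pw i
      have hv_le : ∀ i : ℕ, i ≤ pw.length → G.dist (pw.getVert i) v0 ≤ pw.length - i :=
        fun i hi => AD4Paux.dist_getVert_le' hconn pw i hi
      have htri_uv : ∀ i : ℕ, i ≤ pw.length →
          (G.dist u (pw.getVert i) = i ∧ G.dist (pw.getVert i) v0 = pw.length - i) := by
        intro i hi
        have h1 := hu_le i
        have h2 := hv_le i hi
        have h3 := tri u (pw.getVert i) v0
        constructor <;> omega
      have h2facts := htri_uv 2 (by omega)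
      have h3facts := htri_uv 3 (by omega)
      have hL : pw.length = 5 := by
        by_contra hne
        have hab : 3 ≤ G.dist u x3 := by rw [hx3_def]; omega
        have hac : 3 ≤ G.dist u v0 := by omega
        have hbc : 3 ≤ G.dist x3 v0 := by rw [hx3_def]; omega
        exact AD4Paux.scatter hconn hdegmin hn2 hab hac hbc
      have hD5 : G.dist u v0 = 5 := by omega
      have h1facts := htri_uv 1 (by omega)
      have h4facts := htri_uv 4 (by omega)
      have hux1 : G.dist u x1 = 1 := by rw [hx1_def]; omega
      have hx1v : G.dist x1 v0 = 4 := by rw [hx1_def]; omega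
      have hux2 : G.dist u x2 = 2 := by rw [hx2_def]; omega
      have hx2v : G.dist x2 v0 = 3 := by rw [hx2_def]; omega
      have hux3 : G.dist u x3 = 3 := by rw [hx3_def]; omega
      have hx3v : G.dist x3 v0 = 2 := by rw [hx3_def]; omega
      have hux4 : G.dist u x4 = 4 := by rw [hx4_def]; omega
      have hx4v : G.dist x4 v0 = 1 := by rw [hx4_def]; omega
      have adjux1 : G.Adj u x1 := by
        have h := pw.adj_getVert_succ (show 0 < pw.length by omega)
        rwa [SimpleGraph.Walk.getVert_zero] at h
      have adj12 : G.Adj x1 x2 := pw.adj_getVert_succ (show 1 < pw.length by omega)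
      have adj23 : G.Adj x2 x3 := pw.adj_getVert_succ (show 2 < pw.length by omega)
      have adj34 : G.Adj x3 x4 := pw.adj_getVert_succ (show 3 < pw.length by omega)
      have adj4v : G.Adj x4 v0 := by
        have h := pw.adj_getVert_succ (show 4 < pw.length by omega)
        have h5 : pw.getVert 5 = v0 := by rw [← hL]; exact pw.getVert_length
        rwa [h5] at h
      have hdich : ∀ w : V, (∃ z, 5 ≤ G.dist w z) → G.dist u w ≤ 2 ∨ G.dist v0 w ≤ 2 := by
        intro w hw
        by_contra hcon
        push_neg at hcon
        exact AD4Paux.scatter hconn hdegmin hn2 (show 3 ≤ G.dist u v0 by omega)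
          (show 3 ≤ G.dist u w by omega) (show 3 ≤ G.dist v0 w by omega)
      have hnotboth : ∀ w : V, G.dist u w ≤ 2 → G.dist v0 w ≤ 2 → False := by
        intro w h1 h2
        have h3 := tri u w v0
        rw [symd w v0] at h3
        omega
      have hpartnerB : ∀ w : V, G.dist u w ≤ 2 → ∀ z : V, 5 ≤ G.dist w z →
          ((∃ y, 5 ≤ G.dist z y) ∧ G.dist v0 z ≤ 2) := by
        intro w hw z hz
        have hfz : ∃ y, 5 ≤ G.dist z y := ⟨w, by rw [symd]; exact hz⟩
        rcases hdich z hfz with h | h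
        · exfalso
          have h1 := tri w u z
          rw [symd w u] at h1
          omega
        · exact ⟨hfz, h⟩
      have hpartnerA : ∀ w : V, G.dist v0 w ≤ 2 → ∀ z : V, 5 ≤ G.dist w z →
          ((∃ y, 5 ≤ G.dist z y) ∧ G.dist u z ≤ 2) := by
        intro w hw z hz
        have hfz : ∃ y, 5 ≤ G.dist z y := ⟨w, by rw [symd]; exact hz⟩
        rcases hdich z hfz with h | h
        · exact ⟨hfz, h⟩
        · exfalso
          have h1 := tri w v0 z
          rw [symd w v0] at h1
          omega
      have huz3 : ∀ z : V, G.dist v0 z ≤ 2 → 3 ≤ G.dist u z := by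
        intro z hz
        have h1 := tri u z v0
        rw [symd z v0] at h1
        omega
      have hwv3 : ∀ w : V, G.dist u w ≤ 2 → 3 ≤ G.dist v0 w := by
        intro w hw
        have h1 := tri u w v0
        rw [symd w v0] at h1
        omega
      have hx3z2 : ∀ z : V, G.dist v0 z ≤ 2 → G.dist x3 z ≤ 2 := by
        intro z hz
        by_contra hcon
        push_neg at hcon
        exact AD4Paux.scatter hconn hdegmin hn2 (show 3 ≤ G.dist u x3 by omega)
          (huz3 z hz) (show 3 ≤ G.dist x3 z by omega)
      have hx2w2 : ∀ w : V, G.dist u w ≤ 2 → G.dist x2 w ≤ 2 := by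
        intro w hw
        by_contra hcon
        push_neg at hcon
        have hab : 3 ≤ G.dist v0 x2 := by rw [symd v0 x2]; omega
        exact AD4Paux.scatter hconn hdegmin hn2 hab (hwv3 w hw)
          (show 3 ≤ G.dist x2 w by omega)
      have hadj23' : G.dist x2 x3 ≤ 1 := hadj1 _ _ adj23
      have hDAx : ∀ w : V, (∃ z, 5 ≤ G.dist w z) → G.dist u w ≤ 2 →
          G.dist x2 w = 2 ∧ G.dist x3 w = 3 := by
        intro w hfw hw
        obtain ⟨z, hz⟩ := hfw
        obtain ⟨_, hzB⟩ := hpartnerB w hw z hz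
        have h1 : G.dist x3 z ≤ 2 := hx3z2 z hzB
        have h2 : G.dist x2 w ≤ 2 := hx2w2 w hw
        have hlow : 2 ≤ G.dist x2 w := by
          by_contra hcon
          push_neg at hcon
          have t1 := tri w x2 z
          have t2 := tri x2 x3 z
          rw [symd w x2] at t1
          omega
        have hx3w : G.dist x3 w = 3 := by
          have t1 := tri x3 x2 w
          rw [symd x3 x2] at t1
          have t2 := tri w x3 z
          rw [symd w x3] at t2
          omega
        exact ⟨by omega, hx3w⟩
      have hDBx : ∀ z : V, (∃ y, 5 ≤ G.dist z y) → G.dist v0 z ≤ 2 →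
          G.dist x3 z = 2 ∧ G.dist x2 z = 3 := by
        intro z hfz hz
        obtain ⟨w, hw⟩ := hfz
        obtain ⟨_, hwA⟩ := hpartnerA z hz w hw
        have hx2w : G.dist x2 w = 2 := (hDAx w ⟨z, by rw [symd]; exact hw⟩ hwA).1
        have h1 : G.dist x3 z ≤ 2 := hx3z2 z hz
        have hlow : 2 ≤ G.dist x3 z := by
          by_contra hcon
          push_neg at hcon
          have t1 := tri z x3 w
          have t2 := tri x3 x2 w
          rw [symd z x3] at t1
          rw [symd x3 x2] at t2
          omega
        have hx2z : G.dist x2 z = 3 := by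
          have t1 := tri x2 x3 z
          have t2 := tri w x2 z
          rw [symd w x2] at t2
          have hw' : 5 ≤ G.dist w z := by rw [symd w z]; exact hw
          omega
        exact ⟨by omega, hx2z⟩
      have hcross : ∀ w : V, (∃ y, 5 ≤ G.dist w y) → G.dist u w ≤ 2 →
          ∀ z : V, (∃ y, 5 ≤ G.dist z y) → G.dist v0 z ≤ 2 → 3 ≤ G.dist w z := by
        intro w hfw hwu z hfz hzv
        obtain ⟨zw, hzw⟩ := hfw
        obtain ⟨_, hzwB⟩ := hpartnerB w hwu zw hzw
        have h1 := huz3 z hzv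
        have h2 := huz3 zw hzwB
        have hzzw : G.dist z zw ≤ 2 := by
          by_contra hcon
          push_neg at hcon
          exact AD4Paux.scatter hconn hdegmin hn2 h1 h2 (show 3 ≤ G.dist z zw by omega)
        have t1 := tri w z zw
        omega
      set DA : Finset V := Finset.univ.filter
        (fun w => (∃ z, 5 ≤ G.dist w z) ∧ G.dist u w ≤ 2) with hDA_def
      set DB : Finset V := Finset.univ.filter
        (fun w => (∃ z, 5 ≤ G.dist w z) ∧ G.dist v0 w ≤ 2) with hDB_def
      set NDA : Finset V := DA.biUnion (fun w => insert w (G.neighborFinset w)) with hNDA_def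
      set NDB : Finset V := DB.biUnion (fun w => insert w (G.neighborFinset w)) with hNDB_def
      set CC : Finset V := Finset.univ.filter (fun y => G.Adj x2 y ∧ G.Adj x3 y) with hCC_def
      set R2 : Finset V := Finset.univ.filter
        (fun y => G.Adj x2 y ∧ y ≠ x3 ∧ ¬ G.Adj x3 y) with hR2_def
      set R3 : Finset V := Finset.univ.filter
        (fun y => G.Adj x3 y ∧ y ≠ x2 ∧ ¬ G.Adj x2 y) with hR3_def
      have hmemDA : ∀ w : V, w ∈ DA ↔ ((∃ z, 5 ≤ G.dist w z) ∧ G.dist u w ≤ 2) := by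
        intro w; rw [hDA_def]; simp
      have hmemDB : ∀ w : V, w ∈ DB ↔ ((∃ z, 5 ≤ G.dist w z) ∧ G.dist v0 w ≤ 2) := by
        intro w; rw [hDB_def]; simp
      have hmemCC : ∀ y : V, y ∈ CC ↔ (G.Adj x2 y ∧ G.Adj x3 y) := by
        intro y; rw [hCC_def]; simp
      have hmemR2 : ∀ y : V, y ∈ R2 ↔ (G.Adj x2 y ∧ y ≠ x3 ∧ ¬ G.Adj x3 y) := by
        intro y; rw [hR2_def]; simp
      have hmemR3 : ∀ y : V, y ∈ R3 ↔ (G.Adj x3 y ∧ y ≠ x2 ∧ ¬ G.Adj x2 y) := by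
        intro y; rw [hR3_def]; simp
      have hNDAmem : ∀ y ∈ NDA, ∃ w : V,
          ((∃ z, 5 ≤ G.dist w z) ∧ G.dist u w ≤ 2) ∧ G.dist w y ≤ 1 := by
        intro y hy
        rw [hNDA_def, Finset.mem_biUnion] at hy
        obtain ⟨w, hwDA, hyw⟩ := hy
        refine ⟨w, (hmemDA w).mp hwDA, ?_⟩
        rcases Finset.mem_insert.mp hyw with h | h
        · subst h; simp [SimpleGraph.dist_self]
        · exact hadj1 _ _ (by simpa using h)
      have hNDBmem : ∀ y ∈ NDB, ∃ w : V,
          ((∃ z, 5 ≤ G.dist w z) ∧ G.dist v0 w ≤ 2) ∧ G.dist w y ≤ 1 := by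
        intro y hy
        rw [hNDB_def, Finset.mem_biUnion] at hy
        obtain ⟨w, hwDB, hyw⟩ := hy
        refine ⟨w, (hmemDB w).mp hwDB, ?_⟩
        rcases Finset.mem_insert.mp hyw with h | h
        · subst h; simp [SimpleGraph.dist_self]
        · exact hadj1 _ _ (by simpa using h)
      -- distance facts for members of NDA / NDB
      have hNDAy : ∀ y ∈ NDA, 2 ≤ G.dist x3 y ∧ 1 ≤ G.dist x2 y := by
        intro y hy
        obtain ⟨w, hw, hwy⟩ := hNDAmem y hy
        obtain ⟨h2w, h3w⟩ := hDAx w hw.1 hw.2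
        have t2 := tri x2 y w
        have t3 := tri x3 y w
        rw [symd y w] at t2 t3
        constructor <;> omega
      have hNDBy : ∀ y ∈ NDB, 2 ≤ G.dist x2 y ∧ 1 ≤ G.dist x3 y := by
        intro y hy
        obtain ⟨z, hz, hzy⟩ := hNDBmem y hy
        obtain ⟨h3z, h2z⟩ := hDBx z hz.1 hz.2
        have t2 := tri x2 y z
        have t3 := tri x3 y z
        rw [symd y z] at t2 t3
        constructor <;> omega
      -- pairwise disjointness
      have dj12 : Disjoint NDA NDB := by
        rw [Finset.disjoint_left]
        intro y h1 h2
        obtain ⟨w, hw, hwy⟩ := hNDAmem y h1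
        obtain ⟨z, hz, hzy⟩ := hNDBmem y h2
        have h3 := hcross w hw.1 hw.2 z hz.1 hz.2
        have t := tri w y z
        rw [symd z y] at hzy
        omega
      have dj13 : Disjoint NDA ({x2, x3} : Finset V) := by
        rw [Finset.disjoint_left]
        intro y h1 h2
        obtain ⟨h3y, h2y⟩ := hNDAy y h1
        rcases Finset.mem_insert.mp h2 with h | h
        · subst h; rw [SimpleGraph.dist_self] at h2y; omega
        · rw [Finset.mem_singleton] at h; subst h
          rw [SimpleGraph.dist_self] at h3y; omega
      have dj23 : Disjoint NDB ({x2, x3} : Finset V) := by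
        rw [Finset.disjoint_left]
        intro y h1 h2
        obtain ⟨h2y, h3y⟩ := hNDBy y h1
        rcases Finset.mem_insert.mp h2 with h | h
        · subst h; rw [SimpleGraph.dist_self] at h2y; omega
        · rw [Finset.mem_singleton] at h; subst h
          rw [SimpleGraph.dist_self] at h3y; omega
      have dj14 : Disjoint NDA CC := by
        rw [Finset.disjoint_left]
        intro y h1 h2
        have h3 := (hNDAy y h1).1
        have := hadj1 _ _ ((hmemCC y).mp h2).2
        omega
      have dj24 : Disjoint NDB CC := by
        rw [Finset.disjoint_left]
        intro y h1 h2
        have h3 := (hNDBy y h1).1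
        have := hadj1 _ _ ((hmemCC y).mp h2).1
        omega
      have dj34 : Disjoint ({x2, x3} : Finset V) CC := by
        rw [Finset.disjoint_left]
        intro y h1 h2
        rcases Finset.mem_insert.mp h1 with h | h
        · subst h; exact G.irrefl ((hmemCC x2).mp h2).1
        · rw [Finset.mem_singleton] at h; subst h
          exact G.irrefl ((hmemCC x3).mp h2).2
      have dj15 : Disjoint NDA (R2 \ NDA) := (Finset.sdiff_disjoint).symm
      have dj25 : Disjoint NDB (R2 \ NDA) := by
        rw [Finset.disjoint_left]
        intro y h1 h2
        have h3 := (hNDBy y h1).1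
        have h4 := (hmemR2 y).mp (Finset.mem_sdiff.mp h2).1
        have := hadj1 _ _ h4.1
        omega
      have dj35 : Disjoint ({x2, x3} : Finset V) (R2 \ NDA) := by
        rw [Finset.disjoint_left]
        intro y h1 h2
        have h4 := (hmemR2 y).mp (Finset.mem_sdiff.mp h2).1
        rcases Finset.mem_insert.mp h1 with h | h
        · subst h; exact G.irrefl h4.1
        · rw [Finset.mem_singleton] at h; subst h
          exact h4.2.1 rfl
      have dj45 : Disjoint CC (R2 \ NDA) := by
        rw [Finset.disjoint_left]
        intro y h1 h2
        have h4 := (hmemR2 y).mp (Finset.mem_sdiff.mp h2).1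
        exact h4.2.2 ((hmemCC y).mp h1).2
      have dj16 : Disjoint NDA (R3 \ NDB) := by
        rw [Finset.disjoint_left]
        intro y h1 h2
        have h3 := (hNDAy y h1).1
        have h4 := (hmemR3 y).mp (Finset.mem_sdiff.mp h2).1
        have := hadj1 _ _ h4.1
        omega
      have dj26 : Disjoint NDB (R3 \ NDB) := (Finset.sdiff_disjoint).symm
      have dj36 : Disjoint ({x2, x3} : Finset V) (R3 \ NDB) := by
        rw [Finset.disjoint_left]
        intro y h1 h2
        have h4 := (hmemR3 y).mp (Finset.mem_sdiff.mp h2).1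
        rcases Finset.mem_insert.mp h1 with h | h
        · subst h; exact h4.2.1 rfl
        · rw [Finset.mem_singleton] at h; subst h
          exact G.irrefl h4.1
      have dj46 : Disjoint CC (R3 \ NDB) := by
        rw [Finset.disjoint_left]
        intro y h1 h2
        have h4 := (hmemR3 y).mp (Finset.mem_sdiff.mp h2).1
        exact h4.2.2 ((hmemCC y).mp h1).1
      have dj56 : Disjoint (R2 \ NDA) (R3 \ NDB) := by
        rw [Finset.disjoint_left]
        intro y h1 h2
        have h4 := (hmemR2 y).mp (Finset.mem_sdiff.mp h1).1
        have h5 := (hmemR3 y).mp (Finset.mem_sdiff.mp h2).1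
        exact h5.2.2 h4.1
      -- the disjoint-union cardinality bound
      have hcardU : NDA.card + NDB.card + 2 + CC.card
          + (R2 \ NDA).card + (R3 \ NDB).card ≤ n := by
        have e1 : (NDA ∪ NDB).card = NDA.card + NDB.card :=
          Finset.card_union_of_disjoint dj12
        have e2 : (NDA ∪ NDB ∪ {x2, x3}).card = (NDA ∪ NDB).card + 2 := by
          rw [Finset.card_union_of_disjoint (Finset.disjoint_union_left.mpr ⟨dj13, dj23⟩),
            Finset.card_pair adj23.ne]
        have e3 : (NDA ∪ NDB ∪ {x2, x3} ∪ CC).card = (NDA ∪ NDB ∪ {x2, x3}).card + CC.card := by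
          rw [Finset.card_union_of_disjoint (Finset.disjoint_union_left.mpr
            ⟨Finset.disjoint_union_left.mpr ⟨dj14, dj24⟩, dj34⟩)]
        have e4 : (NDA ∪ NDB ∪ {x2, x3} ∪ CC ∪ (R2 \ NDA)).card
            = (NDA ∪ NDB ∪ {x2, x3} ∪ CC).card + (R2 \ NDA).card := by
          rw [Finset.card_union_of_disjoint (Finset.disjoint_union_left.mpr
            ⟨Finset.disjoint_union_left.mpr ⟨Finset.disjoint_union_left.mpr
              ⟨dj15, dj25⟩, dj35⟩, dj45⟩)]
        have e5 : (NDA ∪ NDB ∪ {x2, x3} ∪ CC ∪ (R2 \ NDA) ∪ (R3 \ NDB)).card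
            = (NDA ∪ NDB ∪ {x2, x3} ∪ CC ∪ (R2 \ NDA)).card + (R3 \ NDB).card := by
          rw [Finset.card_union_of_disjoint (Finset.disjoint_union_left.mpr
            ⟨Finset.disjoint_union_left.mpr ⟨Finset.disjoint_union_left.mpr
              ⟨Finset.disjoint_union_left.mpr ⟨dj16, dj26⟩, dj36⟩, dj46⟩, dj56⟩)]
        have hsub := Finset.card_le_card (Finset.subset_univ
          (NDA ∪ NDB ∪ ({x2, x3} : Finset V) ∪ CC ∪ (R2 \ NDA) ∪ (R3 \ NDB)))
        rw [Finset.card_univ] at hsub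
        omega
      -- basic memberships
      have huDA : u ∈ DA := by
        rw [hmemDA]
        exact ⟨⟨v0, by omega⟩, by rw [SimpleGraph.dist_self]; omega⟩
      have hvDB : v0 ∈ DB := by
        rw [hmemDB]
        exact ⟨⟨u, by rw [symd]; omega⟩, by rw [SimpleGraph.dist_self]; omega⟩
      -- cardinality lower bounds
      have hNA1 : d + 1 ≤ NDA.card := by
        have hsub : insert u (G.neighborFinset u) ⊆ NDA := by
          intro y hy
          rw [hNDA_def, Finset.mem_biUnion]
          exact ⟨u, huDA, hy⟩
        have h1 := Finset.card_le_card hsub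
        rw [Finset.card_insert_of_notMem (by simp),
          SimpleGraph.card_neighborFinset_eq_degree] at h1
        have := hdegmin u
        omega
      have hNB1 : d + 1 ≤ NDB.card := by
        have hsub : insert v0 (G.neighborFinset v0) ⊆ NDB := by
          intro y hy
          rw [hNDB_def, Finset.mem_biUnion]
          exact ⟨v0, hvDB, hy⟩
        have h1 := Finset.card_le_card hsub
        rw [Finset.card_insert_of_notMem (by simp),
          SimpleGraph.card_neighborFinset_eq_degree] at h1
        have := hdegmin v0
        omega
      have hNA2 : DA.card + (R2 ∩ NDA).card ≤ NDA.card := by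
        have hdisj : Disjoint DA (R2 ∩ NDA) := by
          rw [Finset.disjoint_left]
          intro w hw hw2
          have hmem := (hmemDA w).mp hw
          have h2 := (hDAx w hmem.1 hmem.2).1
          have hR := (hmemR2 w).mp (Finset.mem_of_mem_inter_left hw2)
          have := hadj1 _ _ hR.1
          omega
        have hsub : DA ∪ (R2 ∩ NDA) ⊆ NDA := by
          apply Finset.union_subset
          · intro w hw
            rw [hNDA_def, Finset.mem_biUnion]
            exact ⟨w, hw, Finset.mem_insert_self _ _⟩
          · exact Finset.inter_subset_right
        have h1 := Finset.card_le_card hsub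
        rwa [Finset.card_union_of_disjoint hdisj] at h1
      have hNB2 : DB.card + (R3 ∩ NDB).card ≤ NDB.card := by
        have hdisj : Disjoint DB (R3 ∩ NDB) := by
          rw [Finset.disjoint_left]
          intro w hw hw2
          have hmem := (hmemDB w).mp hw
          have h2 := (hDBx w hmem.1 hmem.2).1
          have hR := (hmemR3 w).mp (Finset.mem_of_mem_inter_left hw2)
          have := hadj1 _ _ hR.1
          omega
        have hsub : DB ∪ (R3 ∩ NDB) ⊆ NDB := by
          apply Finset.union_subset
          · intro w hw
            rw [hNDB_def, Finset.mem_biUnion]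
            exact ⟨w, hw, Finset.mem_insert_self _ _⟩
          · exact Finset.inter_subset_right
        have h1 := Finset.card_le_card hsub
        rwa [Finset.card_union_of_disjoint hdisj] at h1
      have ht5 : (R2 \ NDA).card + (R2 ∩ NDA).card = R2.card :=
        Finset.card_sdiff_add_card_inter R2 NDA
      have ht6 : (R3 \ NDB).card + (R3 ∩ NDB).card = R3.card :=
        Finset.card_sdiff_add_card_inter R3 NDB
      have hx2deg : d ≤ 1 + CC.card + R2.card := by
        have hsub : G.neighborFinset x2 ⊆ insert x3 (CC ∪ R2) := by
          intro y hy
          have hadj : G.Adj x2 y := by simpa using hy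
          by_cases h3 : y = x3
          · rw [h3]; exact Finset.mem_insert_self _ _
          · apply Finset.mem_insert_of_mem
            by_cases hA : G.Adj x3 y
            · exact Finset.mem_union_left _ ((hmemCC y).mpr ⟨hadj, hA⟩)
            · exact Finset.mem_union_right _ ((hmemR2 y).mpr ⟨hadj, h3, hA⟩)
        have h1 := Finset.card_le_card hsub
        have h2 := Finset.card_insert_le x3 (CC ∪ R2)
        have h3 := Finset.card_union_le CC R2
        have h4 := hdegmin x2
        rw [SimpleGraph.card_neighborFinset_eq_degree] at h1
        omega
      have hx3deg : d ≤ 1 + CC.card + R3.card := by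
        have hsub : G.neighborFinset x3 ⊆ insert x2 (CC ∪ R3) := by
          intro y hy
          have hadj : G.Adj x3 y := by simpa using hy
          by_cases h3 : y = x2
          · rw [h3]; exact Finset.mem_insert_self _ _
          · apply Finset.mem_insert_of_mem
            by_cases hA : G.Adj x2 y
            · exact Finset.mem_union_left _ ((hmemCC y).mpr ⟨hA, hadj⟩)
            · exact Finset.mem_union_right _ ((hmemR3 y).mpr ⟨hadj, h3, hA⟩)
        have h1 := Finset.card_le_card hsub
        have h2 := Finset.card_insert_le x2 (CC ∪ R3)
        have h3 := Finset.card_union_le CC R3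
        have h4 := hdegmin x3
        rw [SimpleGraph.card_neighborFinset_eq_degree] at h1
        omega
      -- bounds on m
      have hmA : ∀ w ∈ DA, m w ≤ DB.card := by
        intro w hw
        simp only [hm_def]
        apply Finset.card_le_card
        intro z hz
        rw [Finset.mem_filter] at hz
        obtain ⟨hf, hside⟩ := hpartnerB w ((hmemDA w).mp hw).2 z hz.2
        exact (hmemDB z).mpr ⟨hf, hside⟩
      have hmB : ∀ w ∈ DB, m w ≤ DA.card := by
        intro w hw
        simp only [hm_def]
        apply Finset.card_le_card
        intro z hz
        rw [Finset.mem_filter] at hz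
        obtain ⟨hf, hside⟩ := hpartnerA w ((hmemDB w).mp hw).2 z hz.2
        exact (hmemDA z).mpr ⟨hf, hside⟩
      have hm0 : ∀ w : V, w ∉ DA → w ∉ DB → m w = 0 := by
        intro w h1 h2
        simp only [hm_def]
        rw [Finset.card_eq_zero, Finset.filter_eq_empty_iff]
        intro z _ hz
        have hfw : ∃ y, 5 ≤ G.dist w y := ⟨z, hz⟩
        rcases hdich w hfw with h | h
        · exact h1 ((hmemDA w).mpr ⟨hfw, h⟩)
        · exact h2 ((hmemDB w).mpr ⟨hfw, h⟩)
      have hDBsub : DB ⊆ Finset.univ \ DA := by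
        intro z hz
        rw [Finset.mem_sdiff]
        refine ⟨Finset.mem_univ z, fun hzA => ?_⟩
        exact hnotboth z ((hmemDA z).mp hzA).2 ((hmemDB z).mp hz).2
      have hFle : F ≤ DA.card * DB.card + DB.card * DA.card := by
        rw [hF_def]
        have e1 : ∑ w ∈ Finset.univ \ DA, m w + ∑ w ∈ DA, m w = ∑ w : V, m w :=
          Finset.sum_sdiff (Finset.subset_univ DA)
        have e2 : ∑ w ∈ (Finset.univ \ DA) \ DB, m w + ∑ w ∈ DB, m w
            = ∑ w ∈ Finset.univ \ DA, m w := Finset.sum_sdiff hDBsub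
        have e3 : ∑ w ∈ (Finset.univ \ DA) \ DB, m w = 0 := by
          apply Finset.sum_eq_zero
          intro w hw
          rw [Finset.mem_sdiff, Finset.mem_sdiff] at hw
          exact hm0 w hw.1.2 hw.2
        have e4 : ∑ w ∈ DA, m w ≤ DA.card * DB.card := by
          have := Finset.sum_le_card_nsmul DA m DB.card hmA
          simpa [smul_eq_mul] using this
        have e5 : ∑ w ∈ DB, m w ≤ DB.card * DA.card := by
          have := Finset.sum_le_card_nsmul DB m DA.card hmB
          simpa [smul_eq_mul] using this
        omega
      exact AD4Paux.final_arith n d F DA.card DB.card (R2 ∩ NDA).card (R3 ∩ NDB).card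
        NDA.card NDB.card CC.card (R2 \ NDA).card (R3 \ NDB).card R2.card R3.card
        hn1 hn2 hcardU hNA1 hNB1 hNA2 hNB2 ht5 ht6 hx2deg hx3deg hFle



    · push_neg at hfar
      have hF0 : F = 0 := by
        rw [hF_def]
        apply Finset.sum_eq_zero
        intro v _
        rw [hm_def]
        rw [Finset.card_eq_zero, Finset.filter_eq_empty_iff]
        intro z _
        have := hfar v z
        omega
      rw [hF0]
      have h73 : 7 * d + 3 ≤ 3 * n := by omega
      calc 7 * d * n + 3 * 0 + 3 * n = (7 * d + 3) * n := by ring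
        _ ≤ (3 * n) * n := Nat.mul_le_mul_right n h73
        _ = 3 * (n * n) := by ring
  -- conclude
  rw [hgoalcast]
  have h1 : ((7 : ℝ)) * d * n + 3 * F + 3 * n ≤ 3 * (n * n) := by exact_mod_cast hkey
  have h2 : ((∑ v : V, deg4 v : ℕ) : ℝ) + (F : ℝ) + (n : ℝ) = (n : ℝ) * n := by
    exact_mod_cast hsum
  have hFnn : (0 : ℝ) ≤ (F : ℝ) := Nat.cast_nonneg F
  linarith
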